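/- Let a, b, ξ > 0 satisfy √a + √b = (2ξ)^{1/4} and a + b < √(2ξ), and let δ₂ > 0 be sufficiently small. Suppose g : [0,1] → ℝ is absolutely continuous with g(0) = a, g(1) = b, |{t : g(t) = 0}| = 0, and ‖g − h̄‖_∞ ≥ δ₂, where h̄(t) = (1−t)a + tb. Then Σ⁽¹⁾(g) − min Σ⁽¹⁾ ≥ 2δ₂², where Σ⁽¹⁾(g) = (1/2)∫₀¹ g'² dt − ξ|{g = 0}| and min Σ⁽¹⁾ = (1/2)(a−b)². -/

import Mathlib

open MeasureTheory Set

lemma sq_int_implies_int (f : ℝ → ℝ) (hm : AEStronglyMeasurable f volume) {u v : ℝ}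
    (h2 : IntervalIntegrable (fun s => f s ^ 2) volume u v) :
    IntervalIntegrable f volume u v := by
  have hbig : IntervalIntegrable (fun s => f s ^ 2 + 1) volume u v :=
    h2.add intervalIntegrable_const
  refine hbig.mono_fun hm.restrict ?_
  filter_upwards with s
  have h1 : |f s| ≤ f s ^ 2 + 1 := by nlinarith [sq_nonneg (|f s| - 1), sq_abs (f s)]
  have h2' : (0:ℝ) ≤ f s ^ 2 + 1 := by positivity
  simpa [Real.norm_eq_abs, abs_of_nonneg h2'] using h1

lemma cs_interval (f : ℝ → ℝ) (hm : AEStronglyMeasurable f volume) {u v : ℝ} (huv : u ≤ v)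
    (h2 : IntervalIntegrable (fun s => f s ^ 2) volume u v) :
    (∫ s in u..v, f s) ^ 2 ≤ (v - u) * ∫ s in u..v, f s ^ 2 := by
  rcases eq_or_lt_of_le huv with h | h
  · subst h; simp
  · have hL : (0:ℝ) < v - u := by linarith
    have hf : IntervalIntegrable f volume u v := sq_int_implies_int f hm h2
    set I := ∫ s in u..v, f s with hI
    set S := ∫ s in u..v, f s ^ 2 with hS
    set c := I / (v - u) with hc
    have hcL : c * (v - u) = I := by rw [hc, div_mul_cancel₀ _ hL.ne']
    have hint : IntervalIntegrable (fun s => f s ^ 2 - 2 * c * f s + c ^ 2) volume u v :=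
      (h2.sub (hf.const_mul (2 * c))).add intervalIntegrable_const
    have hnn : (0:ℝ) ≤ ∫ s in u..v, (f s - c) ^ 2 :=
      intervalIntegral.integral_nonneg huv (fun s _ => sq_nonneg _)
    have heq : (∫ s in u..v, (f s - c) ^ 2) = S - 2 * c * I + c ^ 2 * (v - u) := by
      have : (fun s => (f s - c) ^ 2) = fun s => f s ^ 2 - 2 * c * f s + c ^ 2 := by
        funext s; ring
      rw [this, intervalIntegral.integral_add (h2.sub (hf.const_mul (2 * c)))
        intervalIntegrable_const,
        intervalIntegral.integral_sub h2 (hf.const_mul (2 * c)),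
        intervalIntegral.integral_const_mul, intervalIntegral.integral_const]
      rw [smul_eq_mul]
      field_simp
      ring
    rw [heq] at hnn
    nlinarith [hnn, hcL, hL, sq_nonneg c]

lemma alg_ineq (t X Y c d : ℝ) (ht0 : 0 < t) (ht1 : t < 1)
    (h1 : (t * c + d) ^ 2 ≤ t * X) (h2 : ((1 - t) * c - d) ^ 2 ≤ (1 - t) * Y) :
    c ^ 2 + 4 * d ^ 2 ≤ X + Y := by
  have h1' : (1 - t) * ((t * c + d) ^ 2) ≤ (1 - t) * (t * X) :=
    mul_le_mul_of_nonneg_left h1 (by linarith)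
  have h2' : t * (((1 - t) * c - d) ^ 2) ≤ t * ((1 - t) * Y) :=
    mul_le_mul_of_nonneg_left h2 ht0.le
  have key : t * (1 - t) * (c ^ 2) + d ^ 2 ≤ t * (1 - t) * (X + Y) := by nlinarith [h1', h2']
  nlinarith [key, mul_pos ht0 (by linarith : (0:ℝ) < 1 - t),
    mul_nonneg (sq_nonneg (2 * t - 1)) (sq_nonneg d)]

/-- One-dimensional pinning energy functional:
`Σ⁽¹⁾(g) = (1/2)∫₀¹ g'(t)² dt − ξ·|{t ∈ [0,1] : g(t) = 0}|`. -/
noncomputable def pinE (ξ : ℝ) (g : ℝ → ℝ) : ℝ :=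
  (1/2) * ∫ t in (0:ℝ)..1, (deriv g t)^2
    - ξ * (volume {t ∈ Icc (0:ℝ) 1 | g t = 0}).toReal

/-- Stability for profiles not touching zero: if `g` is absolutely continuous on `[0,1]`
(with square-integrable derivative), `g(0) = a`, `g(1) = b`, `|{g = 0}| = 0`, and `g`
deviates from the straight line `h̄` by at least `δ₂` in sup-norm, then
`Σ⁽¹⁾(g) − min Σ⁽¹⁾ ≥ 2δ₂²`, for all sufficiently small `δ₂ > 0`. -/
theorem stmt5 (a b ξ : ℝ) (ha : 0 < a) (hb : 0 < b) (hξ : 0 < ξ)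
    (hcrit : Real.sqrt a + Real.sqrt b = (2*ξ) ^ ((1:ℝ)/4))
    (hab : a + b < Real.sqrt (2*ξ)) :
    ∃ δ₀ > (0:ℝ), ∀ δ₂ : ℝ, 0 < δ₂ → δ₂ ≤ δ₀ →
      ∀ g : ℝ → ℝ,
        (∀ x ∈ Icc (0:ℝ) 1, g x = a + ∫ s in (0:ℝ)..x, deriv g s) →
        IntervalIntegrable (fun s => (deriv g s)^2) volume 0 1 →
        g 1 = b →
        volume {t ∈ Icc (0:ℝ) 1 | g t = 0} = 0 →
        (∃ t ∈ Icc (0:ℝ) 1, δ₂ ≤ |g t - ((1-t)*a + t*b)|) →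
        2 * δ₂^2 ≤ pinE ξ g - (1/2) * (a-b)^2 := by
  refine ⟨1, one_pos, ?_⟩
  intro δ₂ hδ hδ1 g hrep hsq hg1 hzero ⟨t₀, ht₀, hdev⟩
  obtain ⟨ht₀0, ht₀1⟩ := ht₀
  have hg0 : g 0 = a := by simpa using hrep 0 ⟨le_refl 0, zero_le_one⟩
  -- t₀ is interior
  have ht0pos : 0 < t₀ := by
    rcases ht₀0.lt_or_eq with h | h
    · exact h
    · exfalso; subst h; simp [hg0] at hdev; linarith
  have ht1lt : t₀ < 1 := by
    rcases ht₀1.lt_or_eq with h | h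
    · exact h
    · exfalso; subst h; simp [hg1] at hdev; linarith
  set d := g t₀ - ((1 - t₀) * a + t₀ * b) with hd
  have hmeas : AEStronglyMeasurable (deriv g) volume :=
    (measurable_deriv g).aestronglyMeasurable
  have hf : IntervalIntegrable (deriv g) volume 0 1 := sq_int_implies_int _ hmeas hsq
  have hsub1 : uIcc (0:ℝ) t₀ ⊆ uIcc (0:ℝ) 1 :=
    uIcc_subset_uIcc (by simp) (by rw [uIcc_of_le zero_le_one]; exact ⟨ht₀0, ht₀1⟩)
  have hsub2 : uIcc t₀ (1:ℝ) ⊆ uIcc (0:ℝ) 1 :=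
    uIcc_subset_uIcc (by rw [uIcc_of_le zero_le_one]; exact ⟨ht₀0, ht₀1⟩) (by simp)
  have hsq1 := hsq.mono_set hsub1
  have hsq2 := hsq.mono_set hsub2
  have hf1 := hf.mono_set hsub1
  have hf2 := hf.mono_set hsub2
  -- values of the integrals of deriv g
  have hI1 : (∫ s in (0:ℝ)..t₀, deriv g s) = g t₀ - a := by
    have := hrep t₀ ⟨ht₀0, ht₀1⟩; linarith
  have hsplit : (∫ s in (0:ℝ)..t₀, deriv g s) + (∫ s in t₀..(1:ℝ), deriv g s)
      = ∫ s in (0:ℝ)..(1:ℝ), deriv g s :=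
    intervalIntegral.integral_add_adjacent_intervals hf1 hf2
  have hI01 : (∫ s in (0:ℝ)..(1:ℝ), deriv g s) = b - a := by
    have := hrep 1 ⟨zero_le_one, le_refl 1⟩; rw [hg1] at this; linarith
  have hI2 : (∫ s in t₀..(1:ℝ), deriv g s) = b - g t₀ := by
    rw [hI1, hI01] at hsplit; linarith
  -- Cauchy–Schwarz on each piece
  set X := ∫ s in (0:ℝ)..t₀, (deriv g s) ^ 2 with hX
  set Y := ∫ s in t₀..(1:ℝ), (deriv g s) ^ 2 with hY
  have hCS1 : (g t₀ - a) ^ 2 ≤ t₀ * X := by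
    have := cs_interval (deriv g) hmeas ht₀0 hsq1
    rw [hI1] at this; simpa using this
  have hCS2 : (b - g t₀) ^ 2 ≤ (1 - t₀) * Y := by
    have := cs_interval (deriv g) hmeas ht₀1 hsq2
    rw [hI2] at this; simpa using this
  have hsplit2 : X + Y = ∫ s in (0:ℝ)..(1:ℝ), (deriv g s) ^ 2 :=
    intervalIntegral.integral_add_adjacent_intervals hsq1 hsq2
  -- d² ≥ δ₂²
  have hd2 : δ₂ ^ 2 ≤ d ^ 2 := by
    have := sq_abs d
    nlinarith [hdev, hδ.le, abs_nonneg d]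
  -- key algebraic inequality
  have hP : g t₀ - a = t₀ * (b - a) + d := by rw [hd]; ring
  have hQ : b - g t₀ = (1 - t₀) * (b - a) - d := by rw [hd]; ring
  rw [hP] at hCS1; rw [hQ] at hCS2
  have hfinal : (b - a) ^ 2 + 4 * d ^ 2 ≤ X + Y :=
    alg_ineq t₀ X Y (b - a) d ht0pos ht1lt hCS1 hCS2
  have hpin : pinE ξ g = (1/2) * (X + Y) := by
    unfold pinE; rw [hzero, hsplit2]; simp
  rw [hpin]; nlinarith [hfinal, hd2]
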